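/- Let (f_n) be a sequence of convex functions on an open interval A ⊆ ℝ converging pointwise to f on A, and let t_n ∈ A converge to t₀ ∈ A. If each f_n is differentiable at t_n and f is differentiable at t₀, then f_n'(t_n) → f'(t₀). -/

import Mathlib

open Filter

set_option maxHeartbeats 1000000

/-- The slopes of `g` based at `t₀`, restricted to the left, tend to `g'`. -/
private lemma slope_tendsto_left {g : ℝ → ℝ} {g' t₀ : ℝ} (hg : HasDerivAt g g' t₀) :
    Tendsto (slope g t₀) (nhdsWithin t₀ (Set.Iio t₀)) (nhds g') :=
  (hasDerivAt_iff_tendsto_slope.1 hg).mono_left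
    (nhdsWithin_mono t₀ (fun x hx => ne_of_lt hx))

private lemma slope_tendsto_right {g : ℝ → ℝ} {g' t₀ : ℝ} (hg : HasDerivAt g g' t₀) :
    Tendsto (slope g t₀) (nhdsWithin t₀ (Set.Ioi t₀)) (nhds g') :=
  (hasDerivAt_iff_tendsto_slope.1 hg).mono_left
    (nhdsWithin_mono t₀ (fun x hx => ne_of_gt hx))

/-- Ellis, Lemma V.7.5: if convex functions `f n` on an open interval `(a,b)`
converge pointwise to `f`, `t n → t₀` in `(a,b)`, each `f n` is differentiable at
`t n` and `f` is differentiable at `t₀`, then `f n ' (t n) → f'(t₀)`. -/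
theorem convex_deriv_tendsto (a b : ℝ) (f : ℕ → ℝ → ℝ) (g : ℝ → ℝ)
    (hconv : ∀ n, ConvexOn ℝ (Set.Ioo a b) (f n))
    (hptwise : ∀ t ∈ Set.Ioo a b, Tendsto (fun n => f n t) atTop (nhds (g t)))
    (t : ℕ → ℝ) (t₀ : ℝ) (ht : ∀ n, t n ∈ Set.Ioo a b) (ht₀ : t₀ ∈ Set.Ioo a b)
    (htt : Tendsto t atTop (nhds t₀))
    (f' : ℕ → ℝ) (hf : ∀ n, HasDerivAt (f n) (f' n) (t n))
    (g' : ℝ) (hg : HasDerivAt g g' t₀) :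
    Tendsto f' atTop (nhds g') := by
  obtain ⟨ha0, hb0⟩ := ht₀
  -- Step 1: `f n (t n) → g t₀`.
  have key : Tendsto (fun n => f n (t n)) atTop (nhds (g t₀)) := by
    rw [tendsto_order]
    constructor
    · -- lower bound: for every `c < g t₀`, eventually `c < f n (t n)`.
      intro c hc
      set ε : ℝ := g t₀ - c with hε
      have hεpos : 0 < ε := by simp [hε]; linarith
      set δ : ℝ := ε / (8 * (t₀ - a) + 8) with hδ
      have hδpos : 0 < δ := by
        apply div_pos hεpos; nlinarith
      -- choose `l < t₀` such that all slopes at points of `Ioo l t₀` are `δ`-close to `g'`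
      have h1 : ∀ᶠ y in nhdsWithin t₀ (Set.Iio t₀),
          |slope g t₀ y - g'| < δ ∧ y ∈ Set.Ioo a t₀ := by
        refine Eventually.and ?_ ?_
        · have := (slope_tendsto_left hg).eventually
            (eventually_lt_nhds (show g' < g' + δ by linarith)) |>.and
            ((slope_tendsto_left hg).eventually
            (eventually_gt_nhds (show g' - δ < g' by linarith)))
          filter_upwards [this] with y hy
          rw [abs_sub_lt_iff]; constructor <;> linarith [hy.1, hy.2]
        · exact Ioo_mem_nhdsLT_of_mem ⟨ha0, le_refl t₀⟩
      obtain ⟨l, hl, hlsub⟩ := mem_nhdsLT_iff_exists_Ioo_subset.1 h1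
      -- l < t₀; take m = max l a, d = (t₀ - m)/4, v = t₀ - d, w = t₀ - 2d
      set m : ℝ := max l a with hm
      have hmlt : m < t₀ := max_lt hl ha0
      set d : ℝ := (t₀ - m) / 4 with hd
      have hdpos : 0 < d := by simp [hd]; linarith
      set v : ℝ := t₀ - d with hv
      set w : ℝ := t₀ - 2 * d with hw
      clear_value ε δ m d v w
      have hvmem : v ∈ Set.Ioo l t₀ := by
        constructor
        · have : l ≤ m := by rw [hm]; exact le_max_left _ _
          simp only [hv, hd]; linarith
        · simp [hv]; linarith
      have hwmem : w ∈ Set.Ioo l t₀ := by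
        constructor
        · have : l ≤ m := by rw [hm]; exact le_max_left _ _
          simp only [hw, hd]; linarith
        · simp [hw]; linarith
      have hva : a < v := by
        have : a ≤ m := by rw [hm]; exact le_max_right _ _
        simp only [hv, hd]; linarith
      have hwa : a < w := by
        have : a ≤ m := by rw [hm]; exact le_max_right _ _
        simp only [hw, hd]; linarith
      have hvS : v ∈ Set.Ioo a b := ⟨hva, by linarith [hvmem.2]⟩
      have hwS : w ∈ Set.Ioo a b := ⟨hwa, by linarith [hwmem.2]⟩
      have hvslope := (hlsub hvmem).1
      have hwslope := (hlsub hwmem).1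
      set s2 : ℝ := slope g t₀ v with hs2
      set s1 : ℝ := slope g t₀ w with hs1
      clear_value s1 s2
      have hgv : g v = g t₀ - s2 * d := by
        have hvt : v - t₀ = -d := by simp only [hv]; ring
        have hne : v - t₀ ≠ 0 := by rw [hvt]; exact neg_ne_zero.2 (ne_of_gt hdpos)
        have h := slope_def_field g t₀ v
        have h2 : s2 * (v - t₀) = g v - g t₀ := by rw [hs2, h]; field_simp
        rw [hvt] at h2
        linear_combination -h2
      have hgw : g w = g t₀ - s1 * (2 * d) := by
        have hwt : w - t₀ = -(2 * d) := by simp only [hw]; ring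
        have hne : w - t₀ ≠ 0 := by rw [hwt]; intro h; nlinarith [hdpos]
        have h := slope_def_field g t₀ w
        have h2 : s1 * (w - t₀) = g w - g t₀ := by rw [hs1, h]; field_simp
        rw [hwt] at h2
        linear_combination -h2
      -- the limiting lower bound
      have hvw : v - w = d := by simp [hv, hw]; ring
      have htarget : g v + (g v - g w) / (v - w) * (t₀ - v) > c := by
        have htv : t₀ - v = d := by simp only [hv]; ring
        have h2 : (g v - g w) / (v - w) * (t₀ - v) = g v - g w := by
          rw [hvw, htv, div_mul_cancel₀ _ (ne_of_gt hdpos)]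
        rw [h2]
        have habs2 := abs_sub_lt_iff.1 hvslope
        have habs1 := abs_sub_lt_iff.1 hwslope
        have hdle : d ≤ t₀ - a := by
          have : a ≤ m := by rw [hm]; exact le_max_right _ _
          simp only [hd]; linarith
        have h8 : (0:ℝ) < 8 * (t₀ - a) + 8 := by nlinarith
        have hδd : 4 * d * δ < ε := by
          have hδval : δ * (8 * (t₀ - a) + 8) = ε := by
            rw [hδ]; field_simp
          nlinarith [hdpos, hδpos]
        have hkey : 2 * d * (s2 - s1) < 2 * d * (2 * δ) := by
          apply mul_lt_mul_of_pos_left _ (by linarith : (0:ℝ) < 2 * d)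
          linarith [habs2.2, habs1.1]
        nlinarith [hgv, hgw, hδd, hkey]
      -- the sequence of lower bounds converges to the target
      have hlim : Tendsto (fun n => f n v + (f n v - f n w) / (v - w) * (t n - v))
          atTop (nhds (g v + (g v - g w) / (v - w) * (t₀ - v))) := by
        have h1 := hptwise v hvS
        have h2 := hptwise w hwS
        exact h1.add ((((h1.sub h2).div_const _).mul (htt.sub_const v)))
      have hev1 : ∀ᶠ n in atTop, v < t n :=
        htt.eventually (eventually_gt_nhds (by simp [hv]; linarith))
      have hev2 : ∀ᶠ n in atTop,
          c < f n v + (f n v - f n w) / (v - w) * (t n - v) :=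
        hlim.eventually (eventually_gt_nhds htarget)
      filter_upwards [hev1, hev2] with n h1 h2
      have hwv : w < v := by simp only [hv, hw]; linarith
      have hslope := (hconv n).slope_mono_adjacent hwS (ht n) hwv h1
      have hpos : (0:ℝ) < t n - v := by linarith
      have h3 : (f n v - f n w) / (v - w) * (t n - v) ≤ f n (t n) - f n v :=
        (le_div_iff₀ hpos).1 hslope
      linarith
    · -- upper bound: for every `c > g t₀`, eventually `f n (t n) < c`.
      intro c hc
      have hcont : ContinuousAt g t₀ := hg.continuousAt
      have h1 : ∀ᶠ y in nhds t₀, g y < (g t₀ + c) / 2 :=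
        hcont.eventually (eventually_lt_nhds (by linarith))
      have h2 : ∀ᶠ y in nhds t₀, y ∈ Set.Ioo a b :=
        Ioo_mem_nhds ha0 hb0
      obtain ⟨u, hu_mem, hu_g, hu_S⟩ :
          ∃ u, u ∈ Set.Ioi t₀ ∧ g u < (g t₀ + c) / 2 ∧ u ∈ Set.Ioo a b := by
        have := ((h1.and h2).filter_mono (nhdsWithin_le_nhds (s := Set.Ioi t₀))).and
          (eventually_mem_nhdsWithin (s := Set.Ioi t₀))
        obtain ⟨u, ⟨h3, h4⟩, h5⟩ := this.exists
        exact ⟨u, h5, h3, h4⟩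
      obtain ⟨v, hv_mem, hv_g, hv_S⟩ :
          ∃ v, v ∈ Set.Iio t₀ ∧ g v < (g t₀ + c) / 2 ∧ v ∈ Set.Ioo a b := by
        have := ((h1.and h2).filter_mono (nhdsWithin_le_nhds (s := Set.Iio t₀))).and
          (eventually_mem_nhdsWithin (s := Set.Iio t₀))
        obtain ⟨v, ⟨h3, h4⟩, h5⟩ := this.exists
        exact ⟨v, h5, h3, h4⟩
      have hev1 : ∀ᶠ n in atTop, t n ∈ Set.Ioo v u :=
        htt.eventually (Ioo_mem_nhds hv_mem hu_mem)
      have hev2 : ∀ᶠ n in atTop, f n v < c :=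
        (hptwise v hv_S).eventually (eventually_lt_nhds (by linarith))
      have hev3 : ∀ᶠ n in atTop, f n u < c :=
        (hptwise u hu_S).eventually (eventually_lt_nhds (by linarith))
      filter_upwards [hev1, hev2, hev3] with n h1 h2 h3
      have hseg : t n ∈ segment ℝ v u := by
        rw [segment_eq_Icc (by linarith [h1.1, h1.2] : v ≤ u)]
        exact ⟨le_of_lt h1.1, le_of_lt h1.2⟩
      have := (hconv n).le_on_segment hv_S hu_S hseg
      calc f n (t n) ≤ max (f n v) (f n u) := this
        _ < c := max_lt h2 h3
  -- Step 2: squeeze `f' n` between slopes.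
  rw [tendsto_order]
  constructor
  · -- for `c < g'`, eventually `c < f' n`
    intro c hc
    have h1 : ∀ᶠ y in nhdsWithin t₀ (Set.Iio t₀),
        c < slope g t₀ y ∧ y ∈ Set.Ioo a t₀ :=
      ((slope_tendsto_left hg).eventually (eventually_gt_nhds hc)).and
        (Ioo_mem_nhdsLT_of_mem ⟨ha0, le_refl t₀⟩)
    obtain ⟨v, hv_slope, hv_mem⟩ := h1.exists
    have hvS : v ∈ Set.Ioo a b := ⟨hv_mem.1, by linarith [hv_mem.2]⟩
    have hslope_eq : slope g t₀ v = (g t₀ - g v) / (t₀ - v) := by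
      rw [slope_def_field]
      rw [show g v - g t₀ = -(g t₀ - g v) by ring, show v - t₀ = -(t₀ - v) by ring,
        neg_div_neg_eq]
    have hlim : Tendsto (fun n => (f n (t n) - f n v) / (t n - v)) atTop
        (nhds ((g t₀ - g v) / (t₀ - v))) := by
      have hne : t₀ - v ≠ 0 := by have := hv_mem.2; intro h; linarith [sub_eq_zero.1 h]
      exact (key.sub (hptwise v hvS)).div (htt.sub_const v) hne
    have hev1 : ∀ᶠ n in atTop, v < t n :=
      htt.eventually (eventually_gt_nhds hv_mem.2)
    have hev2 : ∀ᶠ n in atTop, c < (f n (t n) - f n v) / (t n - v) := by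
      apply hlim.eventually (eventually_gt_nhds ?_)
      rw [← hslope_eq]; exact hv_slope
    filter_upwards [hev1, hev2] with n h1 h2
    have h3 : slope (f n) v (t n) ≤ f' n :=
      (hconv n).slope_le_of_hasDerivAt hvS (ht n) h1 (hf n)
    rw [slope_def_field] at h3
    linarith
  · -- for `c > g'`, eventually `f' n < c`
    intro c hc
    have h1 : ∀ᶠ y in nhdsWithin t₀ (Set.Ioi t₀),
        slope g t₀ y < c ∧ y ∈ Set.Ioo t₀ b :=
      ((slope_tendsto_right hg).eventually (eventually_lt_nhds hc)).and
        (Ioo_mem_nhdsGT_of_mem ⟨le_refl t₀, hb0⟩)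
    obtain ⟨u, hu_slope, hu_mem⟩ := h1.exists
    have huS : u ∈ Set.Ioo a b := ⟨by linarith [hu_mem.1], hu_mem.2⟩
    have hlim : Tendsto (fun n => (f n u - f n (t n)) / (u - t n)) atTop
        (nhds ((g u - g t₀) / (u - t₀))) := by
      have hne : u - t₀ ≠ 0 := by have := hu_mem.1; intro h; linarith [sub_eq_zero.1 h]
      exact ((hptwise u huS).sub key).div (tendsto_const_nhds.sub htt) hne
    have hev1 : ∀ᶠ n in atTop, t n < u :=
      htt.eventually (eventually_lt_nhds hu_mem.1)
    have hev2 : ∀ᶠ n in atTop, (f n u - f n (t n)) / (u - t n) < c := by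
      apply hlim.eventually (eventually_lt_nhds ?_)
      have : slope g t₀ u = (g u - g t₀) / (u - t₀) := slope_def_field g t₀ u
      rw [← this]; exact hu_slope
    filter_upwards [hev1, hev2] with n h1 h2
    have h3 : f' n ≤ slope (f n) (t n) u :=
      (hconv n).le_slope_of_hasDerivAt (ht n) huS h1 (hf n)
    rw [slope_def_field] at h3
    linarith
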